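/- Fix an integer c ≥ 3. Then the average effective resistance of the two-dimensional toroidal grid with sides M and M^{c−1} satisfies lim_{M→∞} R_ave(T_{M, M^{c−1}}) / M^{c−2} = 1/12; equivalently, with total size N = M^c, R_ave(T_{N^{1/c}, N^{(c−1)/c}}) ~ N^{(c−2)/c}/12. -/

import Mathlib

open Real Finset

/-- Average effective resistance of the two-dimensional toroidal grid `T_{M1,M2}`. -/
noncomputable def Rave2 (M1 M2 : ℕ) : ℝ :=
  (1 / ((M1 : ℝ) * M2)) * ∑ i ∈ Finset.range M1, ∑ j ∈ Finset.range M2,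
    if i = 0 ∧ j = 0 then 0
    else 1 / (4 - 2 * Real.cos (2 * Real.pi * i / M1) - 2 * Real.cos (2 * Real.pi * j / M2))


private lemma sumA (z : ℂ) (n : ℕ) :
    (1 - z)^2 * ∑ k ∈ range n, (k:ℂ) * z^k
      = z - n * z^n + ((n:ℂ) - 1) * z^(n+1) := by
  induction n with
  | zero => simp
  | succ n ih =>
    rw [Finset.sum_range_succ, mul_add, ih]
    push_cast
    ring

private lemma sumB (z : ℂ) (n : ℕ) :
    (1 - z)^3 * ∑ k ∈ range n, (k:ℂ)^2 * z^k
      = z + z^2 - (n:ℂ)^2 * z^n + (2*(n:ℂ)^2 - 2*n - 1) * z^(n+1)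
        - ((n:ℂ)-1)^2 * z^(n+2) := by
  induction n with
  | zero => simp
  | succ n ih =>
    rw [Finset.sum_range_succ, mul_add, ih]
    push_cast
    ring

private lemma sum_q (n : ℕ) (hn : 0 < n) (z : ℂ) (hz1 : z ≠ 1) (hzn : z^n = 1) :
    ∑ k ∈ range n, ((k:ℂ)^2/(2*n) - k/2) * z^k = -z / (1-z)^2 := by
  have h1 : (1:ℂ) - z ≠ 0 := sub_ne_zero.mpr (Ne.symm hz1)
  have hn' : (n:ℂ) ≠ 0 := Nat.cast_ne_zero.mpr hn.ne'
  have hS1 : ∑ k ∈ range n, (k:ℂ) * z^k = (n:ℂ)*(z-1)/(1-z)^2 := by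
    rw [eq_div_iff (pow_ne_zero _ h1)]
    have h := sumA z n
    rw [pow_succ z n, hzn] at h
    linear_combination h
  have hS2 : ∑ k ∈ range n, (k:ℂ)^2 * z^k
      = (-(n:ℂ)^2 + (2*(n:ℂ)^2 - 2*n)*z + (2*(n:ℂ) - (n:ℂ)^2)*z^2)/(1-z)^3 := by
    rw [eq_div_iff (pow_ne_zero _ h1)]
    have h := sumB z n
    rw [show n+2 = (n+1)+1 from rfl, pow_succ z (n+1), pow_succ z n, hzn] at h
    linear_combination h
  have hsplit : ∑ k ∈ range n, ((k:ℂ)^2/(2*n) - k/2) * z^k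
      = (1/(2*n)) * ∑ k ∈ range n, (k:ℂ)^2 * z^k
        - (1/2) * ∑ k ∈ range n, (k:ℂ) * z^k := by
    rw [Finset.mul_sum, Finset.mul_sum, ← Finset.sum_sub_distrib]
    exact Finset.sum_congr rfl (fun k _ => by ring)
  rw [hsplit, hS1, hS2]
  field_simp
  ring

private lemma gauss1 (n : ℕ) : ∑ k ∈ range n, (k:ℂ) = n*(n-1)/2 := by
  induction n with
  | zero => simp
  | succ n ih => rw [Finset.sum_range_succ, ih]; push_cast; ring

private lemma gauss2 (n : ℕ) : ∑ k ∈ range n, (k:ℂ)^2 = n*(n-1)*(2*n-1)/6 := by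
  induction n with
  | zero => simp
  | succ n ih => rw [Finset.sum_range_succ, ih]; push_cast; ring

private lemma cycle_complex (n : ℕ) (hn : 0 < n) :
    ∑ j ∈ range n, (if j = 0 then (0:ℂ)
      else 1/(2 - 2*(Real.cos (2*Real.pi*j/n) : ℂ))) = ((n:ℂ)^2 - 1)/12 := by
  have hn' : (n:ℂ) ≠ 0 := Nat.cast_ne_zero.mpr hn.ne'
  set ω : ℂ := Complex.exp (2 * Real.pi * Complex.I / n) with hω
  have hprim : IsPrimitiveRoot ω n := Complex.isPrimitiveRoot_exp n hn.ne'
  have hzn : ∀ j : ℕ, (ω^j)^n = 1 := by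
    intro j; rw [← pow_mul, mul_comm, pow_mul, hprim.pow_eq_one, one_pow]
  have hz1 : ∀ j : ℕ, 0 < j → j < n → ω^j ≠ 1 := by
    intro j hj hjn
    exact hprim.pow_ne_one_of_pos_of_lt hj.ne' hjn
  have hz0 : ∀ j : ℕ, ω^j ≠ 0 := by
    intro j h
    have := hzn j
    rw [h] at this
    simp [zero_pow hn.ne'] at this
  set q : ℕ → ℂ := fun k => (k:ℂ)^2/(2*n) - k/2 with hq
  -- each nonzero term equals the q-sum
  have hterm : ∀ j ∈ range n, j ≠ 0 →
      (1/(2 - 2*(Real.cos (2*Real.pi*j/n) : ℂ)))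
        = ∑ k ∈ range n, q k * (ω^j)^k := by
    intro j hj hj0
    have hjn := Finset.mem_range.mp hj
    have h1 : ω^j ≠ 1 := hz1 j (Nat.pos_of_ne_zero hj0) hjn
    have h1' : (1:ℂ) - ω^j ≠ 0 := sub_ne_zero.mpr (Ne.symm h1)
    rw [hq]
    rw [sum_q n hn (ω^j) h1 (hzn j)]
    have hexp : ω^j = Complex.exp ((2*Real.pi*j/n : ℝ) * Complex.I) := by
      rw [hω, ← Complex.exp_nat_mul]
      congr 1
      push_cast
      ring
    have hcos : (2:ℂ) - 2*(Real.cos (2*Real.pi*j/n) : ℂ) = 2 - ω^j - (ω^j)⁻¹ := by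
      rw [hexp, ← Complex.exp_neg, Complex.ofReal_cos, ← neg_mul, Complex.exp_mul_I,
        Complex.exp_mul_I, Complex.cos_neg, Complex.sin_neg]
      ring
    rw [hcos]
    have hden : (2:ℂ) - ω^j - (ω^j)⁻¹ = -(1-ω^j)^2 / ω^j := by
      field_simp [hz0 j]
      ring
    rw [hden, one_div_div, div_neg, ← neg_div]
  have step1 : ∑ j ∈ range n, (if j = 0 then (0:ℂ)
      else 1/(2 - 2*(Real.cos (2*Real.pi*j/n) : ℂ)))
      = ∑ j ∈ range n, (if j = 0 then 0 else ∑ k ∈ range n, q k * (ω^j)^k) :=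
    Finset.sum_congr rfl (fun j hj => by
      by_cases h : j = 0
      · simp [h]
      · simp only [h, if_false]; exact hterm j hj h)
  rw [step1]
  -- remove the if
  have h0mem : (0:ℕ) ∈ range n := Finset.mem_range.mpr hn
  have step2 : ∑ j ∈ range n, (if j = 0 then (0:ℂ) else ∑ k ∈ range n, q k * (ω^j)^k)
      = (∑ j ∈ range n, ∑ k ∈ range n, q k * (ω^j)^k) - ∑ k ∈ range n, q k := by
    have e1 := Finset.sum_eq_sum_sdiff_singleton_add h0mem
        (fun j => if j = 0 then (0:ℂ) else ∑ k ∈ range n, q k * (ω^j)^k)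
    have e2 := Finset.sum_eq_sum_sdiff_singleton_add h0mem
        (fun j => ∑ k ∈ range n, q k * (ω^j)^k)
    have e3 : ∑ j ∈ range n \ {0}, (if j = 0 then (0:ℂ) else ∑ k ∈ range n, q k * (ω^j)^k)
        = ∑ j ∈ range n \ {0}, ∑ k ∈ range n, q k * (ω^j)^k := by
      refine Finset.sum_congr rfl fun j hj => ?_
      have hj0 : j ≠ 0 := by
        have := (Finset.mem_sdiff.mp hj).2
        simpa using this
      simp [hj0]
    rw [e1, e3, e2]
    simp
  rw [step2]
  -- the double sum vanishes
  have step3 : ∑ j ∈ range n, ∑ k ∈ range n, q k * (ω^j)^k = 0 := by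
    rw [Finset.sum_comm]
    have : ∀ k ∈ range n, ∑ j ∈ range n, q k * (ω^j)^k = 0 := by
      intro k hk
      rw [← Finset.mul_sum]
      by_cases hk0 : k = 0
      · subst hk0
        simp [hq]
      · have h1 : ω^k ≠ 1 := hz1 k (Nat.pos_of_ne_zero hk0) (Finset.mem_range.mp hk)
        have hswap : ∑ j ∈ range n, (ω^j)^k = ∑ j ∈ range n, (ω^k)^j := by
          refine Finset.sum_congr rfl fun j _ => ?_
          rw [← pow_mul, mul_comm, pow_mul]
        have : ∑ j ∈ range n, (ω^j)^k = 0 := by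
          rw [hswap, geom_sum_eq h1 n, hzn k, sub_self, zero_div]
        rw [this, mul_zero]
    rw [Finset.sum_congr rfl this, Finset.sum_const, smul_zero]
  rw [step3, zero_sub, hq]
  -- final computation
  have hsplit : ∑ k ∈ range n, ((k:ℂ)^2/(2*n) - k/2)
      = (1/(2*n)) * ∑ k ∈ range n, (k:ℂ)^2 - (1/2) * ∑ k ∈ range n, (k:ℂ) := by
    rw [Finset.mul_sum, Finset.mul_sum, ← Finset.sum_sub_distrib]
    exact Finset.sum_congr rfl (fun k _ => by ring)
  rw [hsplit, gauss1, gauss2]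
  field_simp
  ring

private lemma cycle_sum (n : ℕ) (hn : 0 < n) :
    ∑ j ∈ range n, (if j = 0 then (0:ℝ) else 1/(2 - 2*Real.cos (2*Real.pi*j/n)))
      = ((n:ℝ)^2 - 1)/12 := by
  have key := cycle_complex n hn
  rw [← Complex.ofReal_inj]
  push_cast
  rw [← key]
  refine Finset.sum_congr rfl fun j _ => ?_
  split_ifs with h
  · simp
  · push_cast
    ring


-- lower bound for the half range
private lemma denom_lb_half (n j : ℕ) (hn : 0 < n) (h2j : 2*j ≤ n) :
    16 * (j:ℝ)^2 / (n:ℝ)^2 ≤ 2 - 2*Real.cos (2*Real.pi*j/n) := by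
  have hπ := Real.pi_pos
  have hn' : (0:ℝ) < n := by exact_mod_cast hn
  set x : ℝ := 2*Real.pi*j/n with hx
  have hx0 : 0 ≤ x := by positivity
  have hxπ : x ≤ Real.pi := by
    rw [hx, div_le_iff₀ hn']
    have : (2*(j:ℝ)) ≤ n := by exact_mod_cast h2j
    nlinarith
  have hcos := Real.cos_le_one_sub_mul_cos_sq (x := x) (by rw [abs_of_nonneg hx0]; exact hxπ)
  have hxsq : x^2 = 4*Real.pi^2*(j:ℝ)^2/(n:ℝ)^2 := by
    rw [hx]; field_simp; ring
  have hπ2 : (0:ℝ) < Real.pi^2 := by positivity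
  have heq : 16*(j:ℝ)^2/(n:ℝ)^2 = 2*(2/Real.pi^2 * x^2) := by
    rw [hxsq]; field_simp; ring
  rw [heq]
  linarith [hcos]

private lemma denom_lb (n j : ℕ) (hn : 0 < n) (hj : j < n) :
    16 * ((min j (n-j) : ℕ):ℝ)^2 / (n:ℝ)^2 ≤ 2 - 2*Real.cos (2*Real.pi*j/n) := by
  have hn' : (0:ℝ) < n := by exact_mod_cast hn
  rcases le_total j (n-j) with h | h
  · rw [min_eq_left h]
    exact denom_lb_half n j hn (by omega)
  · rw [min_eq_right h]
    have hcast : ((n - j : ℕ):ℝ) = (n:ℝ) - j := by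
      have : j ≤ n := hj.le
      push_cast [this]; ring
    have hcos : Real.cos (2*Real.pi*j/n) = Real.cos (2*Real.pi*((n-j:ℕ):ℝ)/n) := by
      rw [hcast]
      have harg : 2*Real.pi*((n:ℝ) - j)/n = 2*Real.pi - 2*Real.pi*j/n := by
        field_simp
      rw [harg, Real.cos_two_pi_sub]
    rw [hcos]
    exact denom_lb_half n (n-j) hn (by omega)

-- telescoping tail bound
private lemma tail_bound (a : ℝ) (ha : 0 < a) (N : ℕ) (hN : 0 < N) :
    ∑ j ∈ range N, 1/(a^2 + 16*((j:ℝ)+1)^2/(N:ℝ)^2) ≤ (N:ℝ)/(2*a) := by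
  have hN' : (0:ℝ) < N := by exact_mod_cast hN
  set h : ℕ → ℝ := fun j => 1/(a + 4*(j:ℝ)/N) with hh
  have hpos : ∀ j : ℕ, 0 < a + 4*(j:ℝ)/N := by
    intro j; positivity
  have key : ∀ j : ℕ, 1/(a^2 + 16*((j:ℝ)+1)^2/(N:ℝ)^2) ≤ ((N:ℝ)/2) * (h j - h (j+1)) := by
    intro j
    simp only [hh]
    push_cast
    have h1 : 0 < a + 4*(j:ℝ)/N := by positivity
    have h2 : 0 < a + 4*((j:ℝ)+1)/N := by positivity
    have expand : ((N:ℝ)/2) * (1/(a + 4*(j:ℝ)/N) - 1/(a + 4*((j:ℝ)+1)/N))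
        = 2/((a + 4*(j:ℝ)/N)*(a + 4*((j:ℝ)+1)/N)) := by
      field_simp
      ring
    rw [expand, div_le_div_iff₀ (by positivity) (by positivity), one_mul]
    have hveq : (16:ℝ)*((j:ℝ)+1)^2/(N:ℝ)^2 = (4*((j:ℝ)+1)/N)^2 := by
      field_simp
      ring
    rw [hveq]
    have huv : 4*(j:ℝ)/N ≤ 4*((j:ℝ)+1)/N := by gcongr; linarith
    have hu : (0:ℝ) ≤ 4*(j:ℝ)/N := by positivity
    nlinarith [sq_nonneg (a - 4*((j:ℝ)+1)/N),
      mul_le_mul_of_nonneg_left huv ha.le,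
      mul_le_mul_of_nonneg_left huv hu]
  calc ∑ j ∈ range N, 1/(a^2 + 16*((j:ℝ)+1)^2/(N:ℝ)^2)
      ≤ ∑ j ∈ range N, ((N:ℝ)/2) * (h j - h (j+1)) := Finset.sum_le_sum (fun j _ => key j)
    _ = ((N:ℝ)/2) * (h 0 - h N) := by rw [← Finset.mul_sum, Finset.sum_range_sub' h]
    _ ≤ ((N:ℝ)/2) * (1/a) := by
        have : h 0 = 1/a := by rw [hh]; norm_num
        have hN2 : 0 ≤ h N := le_of_lt (by rw [hh]; positivity)
        have := hpos 0
        nlinarith [hN2, hN'.le]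
    _ = (N:ℝ)/(2*a) := by field_simp

private lemma row_bound (M1 M2 m : ℕ) (h1 : 0 < M1) (h2 : 0 < M2) (hm : 0 < m) :
    ∑ j ∈ range M2, 1/(16*(m:ℝ)^2/(M1:ℝ)^2 + 16*((min j (M2-j) : ℕ):ℝ)^2/(M2:ℝ)^2)
      ≤ (M1:ℝ)^2/(8*(m:ℝ)^2) + (M1:ℝ)*(M2:ℝ)/(4*(m:ℝ)) := by
  have hM1 : (0:ℝ) < M1 := by exact_mod_cast h1
  have hM2 : (0:ℝ) < M2 := by exact_mod_cast h2
  have hm' : (0:ℝ) < m := by exact_mod_cast hm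
  set a : ℝ := 4*(m:ℝ)/M1 with ha
  have ha' : 0 < a := by positivity
  have hasq : a^2 = 16*(m:ℝ)^2/(M1:ℝ)^2 := by rw [ha]; field_simp; ring
  set g : ℕ → ℝ := fun t => 1/(a^2 + 16*(t:ℝ)^2/(M2:ℝ)^2) with hg
  have hgnonneg : ∀ t : ℕ, 0 ≤ g t := by intro t; rw [hg]; positivity
  -- termwise min bound
  have hmin : ∀ j : ℕ, g (min j (M2-j)) ≤ g j + g (M2-j) := by
    intro j
    rcases min_choice j (M2-j) with h | h <;> rw [h]
    · nlinarith [hgnonneg j, hgnonneg (M2-j)]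
    · nlinarith [hgnonneg j, hgnonneg (M2-j)]
  -- reflection
  have hrefl : ∑ j ∈ range M2, g (M2 - j) = ∑ j ∈ range M2, g (j+1) := by
    rw [← Finset.sum_range_reflect (fun j => g (M2 - j)) M2]
    refine Finset.sum_congr rfl fun j hj => ?_
    have hjm := Finset.mem_range.mp hj
    congr 1
    omega
  have hshift : ∑ j ∈ range M2, g j ≤ g 0 + ∑ j ∈ range M2, g (j+1) := by
    have hsub : ∑ j ∈ range M2, g j ≤ ∑ j ∈ range (M2+1), g j := by
      apply Finset.sum_le_sum_of_subset_of_nonneg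
      · exact Finset.range_subset_range.mpr (Nat.le_succ M2)
      · intro j _ _; exact hgnonneg j
    rw [Finset.sum_range_succ' g M2] at hsub
    linarith [hsub]
  have htail : ∑ j ∈ range M2, g (j+1) ≤ (M2:ℝ)/(2*a) := by
    have := tail_bound a ha' M2 h2
    refine le_trans (le_of_eq ?_) this
    refine Finset.sum_congr rfl fun j _ => ?_
    rw [hg]
    push_cast
    norm_num
  -- put it together
  have main : ∑ j ∈ range M2, g (min j (M2-j)) ≤ g 0 + 2*((M2:ℝ)/(2*a)) := by
    calc ∑ j ∈ range M2, g (min j (M2-j))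
        ≤ ∑ j ∈ range M2, (g j + g (M2-j)) := Finset.sum_le_sum (fun j _ => hmin j)
      _ = ∑ j ∈ range M2, g j + ∑ j ∈ range M2, g (M2-j) := Finset.sum_add_distrib
      _ = ∑ j ∈ range M2, g j + ∑ j ∈ range M2, g (j+1) := by rw [hrefl]
      _ ≤ g 0 + 2*∑ j ∈ range M2, g (j+1) := by linarith [hshift]
      _ ≤ g 0 + 2*((M2:ℝ)/(2*a)) := by linarith [htail]
  have hg0 : g 0 = (M1:ℝ)^2/(16*(m:ℝ)^2) := by
    rw [hg]
    simp only [Nat.cast_zero]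
    rw [hasq]
    field_simp
    ring
  have hfin : g 0 + 2*((M2:ℝ)/(2*a)) ≤ (M1:ℝ)^2/(8*(m:ℝ)^2) + (M1:ℝ)*(M2:ℝ)/(4*(m:ℝ)) := by
    rw [hg0, ha]
    have e : 2*((M2:ℝ)/(2*(4*(m:ℝ)/M1))) = (M1:ℝ)*(M2:ℝ)/(4*(m:ℝ)) := by
      field_simp
    rw [e]
    have : (M1:ℝ)^2/(16*(m:ℝ)^2) ≤ (M1:ℝ)^2/(8*(m:ℝ)^2) := by
      apply div_le_div_of_nonneg_left (by positivity) (by positivity)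
      nlinarith
    linarith
  refine le_trans (le_of_eq ?_) (le_trans main hfin)
  refine Finset.sum_congr rfl fun j _ => ?_
  rw [hg, hasq]

private lemma sum_inv_sq_aux (K : ℕ) (hK : 1 ≤ K) :
    ∑ i ∈ Ico 1 (K+1), 1/((i:ℝ))^2 ≤ 2 - 1/(K:ℝ) := by
  induction K, hK using Nat.le_induction with
  | base => norm_num
  | succ K hK ih =>
    rw [Finset.sum_Ico_succ_top (by omega : 1 ≤ K+1)]
    have hK' : (1:ℝ) ≤ (K:ℝ) := by exact_mod_cast hK
    have h1 : 1/((K:ℝ)+1)^2 ≤ 1/((K:ℝ)*((K:ℝ)+1)) := by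
      apply one_div_le_one_div_of_le (by positivity)
      nlinarith
    have h2 : 1/((K:ℝ)*((K:ℝ)+1)) = 1/(K:ℝ) - 1/((K:ℝ)+1) := by
      field_simp
      ring
    push_cast
    push_cast at ih
    linarith [ih, h1, h2]

private lemma sum_inv_sq_le (K : ℕ) : ∑ i ∈ Ico 1 K, 1/((i:ℝ))^2 ≤ 2 := by
  rcases Nat.eq_zero_or_pos K with rfl | hK
  · simp
  have hsub : ∑ i ∈ Ico 1 K, 1/((i:ℝ))^2 ≤ ∑ i ∈ Ico 1 (K+1), 1/((i:ℝ))^2 := by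
    apply Finset.sum_le_sum_of_subset_of_nonneg
    · exact Finset.Ico_subset_Ico le_rfl (Nat.le_succ K)
    · intro i _ _; positivity
  have hK' : (0:ℝ) < K := by exact_mod_cast hK
  have := sum_inv_sq_aux K hK
  have : 0 ≤ 1/(K:ℝ) := by positivity
  linarith [sum_inv_sq_aux K hK]

private lemma sum_inv_aux (K : ℕ) :
    ∑ i ∈ Ico 1 (K+1), 1/(i:ℝ) ≤ 2*Real.sqrt K := by
  induction K with
  | zero => simp
  | succ K ih =>
    rw [Finset.sum_Ico_succ_top (by omega : 1 ≤ K+1)]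
    set s := Real.sqrt K with hs
    set t := Real.sqrt (K+1) with ht
    have hs2 : s^2 = (K:ℝ) := Real.sq_sqrt (by positivity)
    have ht2 : t^2 = (K:ℝ)+1 := by
      rw [ht]
      rw [show ((K:ℕ):ℝ)+1 = ((K+1:ℕ):ℝ) by push_cast; ring]
      exact Real.sq_sqrt (by positivity)
    have hs0 : 0 ≤ s := Real.sqrt_nonneg _
    have ht1 : 1 ≤ t := by
      rw [ht]
      rw [show ((K:ℕ):ℝ)+1 = ((K+1:ℕ):ℝ) by push_cast; ring]
      rw [Real.one_le_sqrt]
      exact_mod_cast Nat.one_le_iff_ne_zero.mpr (Nat.succ_ne_zero K)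
    have hst : s ≤ t := by
      rw [hs, ht]
      apply Real.sqrt_le_sqrt
      push_cast
      linarith
    have hd1 : 0 ≤ t - s := by linarith
    have hd2 : 0 ≤ 2*t^2 - (t+s) := by nlinarith
    have key : 2*s*t^2 + 1 ≤ 2*t*t^2 := by nlinarith [mul_nonneg hd1 hd2, hs2, ht2]
    have htpos : 0 < t^2 := by nlinarith
    have hfrac : 1/((K:ℝ)+1) ≤ 2*t - 2*s := by
      rw [← ht2, div_le_iff₀ htpos]
      nlinarith [key]
    push_cast
    push_cast at ih
    linarith [ih, hfrac]

private lemma sum_inv_le (K : ℕ) : ∑ i ∈ Ico 1 K, 1/(i:ℝ) ≤ 2*Real.sqrt K := by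
  have hsub : ∑ i ∈ Ico 1 K, 1/(i:ℝ) ≤ ∑ i ∈ Ico 1 (K+1), 1/(i:ℝ) := by
    apply Finset.sum_le_sum_of_subset_of_nonneg
    · exact Finset.Ico_subset_Ico le_rfl (Nat.le_succ K)
    · intro i _ _; positivity
  exact le_trans hsub (sum_inv_aux K)

private lemma err_bound (M1 M2 : ℕ) (h1 : 0 < M1) (h2 : 0 < M2) :
    ∑ i ∈ Ico 1 M1, ∑ j ∈ range M2,
      1/(4 - 2*Real.cos (2*Real.pi*i/(M1:ℝ)) - 2*Real.cos (2*Real.pi*j/(M2:ℝ)))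
      ≤ (M1:ℝ)^2/2 + (M1:ℝ)*(M2:ℝ)*Real.sqrt M1 := by
  have hM1 : (0:ℝ) < M1 := by exact_mod_cast h1
  have hM2 : (0:ℝ) < M2 := by exact_mod_cast h2
  set φ : ℕ → ℝ := fun t => (M1:ℝ)^2/(8*(t:ℝ)^2) + (M1:ℝ)*(M2:ℝ)/(4*(t:ℝ)) with hφ
  have hφnn : ∀ t : ℕ, 0 ≤ φ t := by
    intro t; rw [hφ]
    have : (0:ℝ) ≤ (t:ℝ) := by positivity
    apply add_nonneg <;> apply div_nonneg <;> positivity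
  -- inner bound
  have inner : ∀ i ∈ Ico 1 M1, ∑ j ∈ range M2,
      1/(4 - 2*Real.cos (2*Real.pi*i/(M1:ℝ)) - 2*Real.cos (2*Real.pi*j/(M2:ℝ)))
      ≤ φ (min i (M1-i)) := by
    intro i hi
    rcases Finset.mem_Ico.mp hi with ⟨hi1, hi2⟩
    set m := min i (M1-i) with hm
    have hmpos : 0 < m := by omega
    have hm' : (0:ℝ) < m := by exact_mod_cast hmpos
    have ht1 : ∑ j ∈ range M2,
        1/(4 - 2*Real.cos (2*Real.pi*i/(M1:ℝ)) - 2*Real.cos (2*Real.pi*j/(M2:ℝ)))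
        ≤ ∑ j ∈ range M2, 1/(16*(m:ℝ)^2/(M1:ℝ)^2 + 16*((min j (M2-j) : ℕ):ℝ)^2/(M2:ℝ)^2) := by
      refine Finset.sum_le_sum fun j hj => ?_
      have hD1 := denom_lb M1 i h1 hi2
      have hD2 := denom_lb M2 j h2 (Finset.mem_range.mp hj)
      rw [← hm] at hD1
      apply one_div_le_one_div_of_le
      · have : (0:ℝ) ≤ 16*((min j (M2-j) : ℕ):ℝ)^2/(M2:ℝ)^2 := by positivity
        have : (0:ℝ) < 16*(m:ℝ)^2/(M1:ℝ)^2 := by positivity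
        linarith
      · linarith
    have hrow := row_bound M1 M2 m h1 h2 hmpos
    refine le_trans ht1 (le_trans hrow (le_of_eq ?_))
    rw [hφ]
  -- sum the bound over i, using reflection symmetry
  have hmin : ∀ i ∈ Ico 1 M1, φ (min i (M1-i)) ≤ φ i + φ (M1-i) := by
    intro i _
    rcases min_choice i (M1-i) with h | h <;> rw [h]
    · linarith [hφnn (M1-i)]
    · linarith [hφnn i]
  have hrefl : ∑ i ∈ Ico 1 M1, φ (M1-i) = ∑ i ∈ Ico 1 M1, φ i := by
    apply Finset.sum_nbij' (fun i => M1 - i) (fun i => M1 - i)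
    · intro a ha; rcases Finset.mem_Ico.mp ha with ⟨h1', h2'⟩
      exact Finset.mem_Ico.mpr ⟨by omega, by omega⟩
    · intro a ha; rcases Finset.mem_Ico.mp ha with ⟨h1', h2'⟩
      exact Finset.mem_Ico.mpr ⟨by omega, by omega⟩
    · intro a ha; rcases Finset.mem_Ico.mp ha with ⟨h1', h2'⟩; omega
    · intro a ha; rcases Finset.mem_Ico.mp ha with ⟨h1', h2'⟩; omega
    · intro a _; rfl
  have hφsum : ∑ i ∈ Ico 1 M1, φ i
      ≤ (M1:ℝ)^2/8*2 + (M1:ℝ)*(M2:ℝ)/4*(2*Real.sqrt M1) := by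
    have e : ∑ i ∈ Ico 1 M1, φ i
        = (M1:ℝ)^2/8 * ∑ i ∈ Ico 1 M1, 1/((i:ℝ))^2
          + (M1:ℝ)*(M2:ℝ)/4 * ∑ i ∈ Ico 1 M1, 1/(i:ℝ) := by
      rw [Finset.mul_sum, Finset.mul_sum, ← Finset.sum_add_distrib]
      refine Finset.sum_congr rfl fun i _ => ?_
      rw [hφ]
      ring
    rw [e]
    have b1 := sum_inv_sq_le M1
    have b2 := sum_inv_le M1
    have c1 : (0:ℝ) ≤ (M1:ℝ)^2/8 := by positivity
    have c2 : (0:ℝ) ≤ (M1:ℝ)*(M2:ℝ)/4 := by positivity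
    nlinarith [mul_le_mul_of_nonneg_left b1 c1, mul_le_mul_of_nonneg_left b2 c2]
  calc ∑ i ∈ Ico 1 M1, ∑ j ∈ range M2,
        1/(4 - 2*Real.cos (2*Real.pi*i/(M1:ℝ)) - 2*Real.cos (2*Real.pi*j/(M2:ℝ)))
      ≤ ∑ i ∈ Ico 1 M1, φ (min i (M1-i)) := Finset.sum_le_sum inner
    _ ≤ ∑ i ∈ Ico 1 M1, (φ i + φ (M1-i)) := Finset.sum_le_sum hmin
    _ = ∑ i ∈ Ico 1 M1, φ i + ∑ i ∈ Ico 1 M1, φ (M1-i) := Finset.sum_add_distrib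
    _ = 2 * ∑ i ∈ Ico 1 M1, φ i := by rw [hrefl]; ring
    _ ≤ 2 * ((M1:ℝ)^2/8*2 + (M1:ℝ)*(M2:ℝ)/4*(2*Real.sqrt M1)) := by linarith [hφsum]
    _ = (M1:ℝ)^2/2 + (M1:ℝ)*(M2:ℝ)*Real.sqrt M1 := by ring


private lemma sqrt_tendsto_atTop :
    Filter.Tendsto (fun M : ℕ => Real.sqrt M) Filter.atTop Filter.atTop := by
  apply Filter.tendsto_atTop_atTop.mpr
  intro b
  refine ⟨⌈b^2⌉₊, fun M hM => ?_⟩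
  rcases le_or_gt b 0 with hb | hb
  · exact hb.trans (Real.sqrt_nonneg _)
  · rw [← Real.sqrt_sq hb.le]
    apply Real.sqrt_le_sqrt
    have h1 : b^2 ≤ (⌈b^2⌉₊:ℝ) := Nat.le_ceil _
    have h2 : ((⌈b^2⌉₊:ℕ):ℝ) ≤ (M:ℝ) := Nat.cast_le.mpr hM
    linarith

private lemma main_limit (d : ℕ) (hd : 1 ≤ d) :
    Filter.Tendsto (fun M : ℕ => Rave2 M (M ^ (d + 1)) / (M : ℝ) ^ d) Filter.atTop
      (nhds (1 / 12)) := by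
  have h2d : 2*d+2 ≠ 0 := by omega
  have hpow : Filter.Tendsto (fun M : ℕ => (M:ℝ)^(2*d+2)) Filter.atTop Filter.atTop :=
    (Filter.tendsto_pow_atTop h2d).comp tendsto_natCast_atTop_atTop
  have hinv : Filter.Tendsto (fun M : ℕ => 1/(12*(M:ℝ)^(2*d+2))) Filter.atTop (nhds 0) := by
    simp only [one_div]
    exact (hpow.const_mul_atTop (by norm_num : (0:ℝ) < 12)).inv_tendsto_atTop
  have hinv2 : Filter.Tendsto (fun M : ℕ => 1/(2*(M:ℝ))) Filter.atTop (nhds 0) := by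
    simp only [one_div]
    exact (tendsto_natCast_atTop_atTop.const_mul_atTop (by norm_num : (0:ℝ) < 2)).inv_tendsto_atTop
  have hinv3 : Filter.Tendsto (fun M : ℕ => 1/Real.sqrt M) Filter.atTop (nhds 0) := by
    simp only [one_div]
    exact sqrt_tendsto_atTop.inv_tendsto_atTop
  have hL : Filter.Tendsto (fun M : ℕ => 1/12 - 1/(12*(M:ℝ)^(2*d+2)))
      Filter.atTop (nhds (1/12)) := by
    have := (tendsto_const_nhds (x := (1/12:ℝ)) (f := Filter.atTop (α := ℕ))).sub hinv
    simpa using this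
  have hU : Filter.Tendsto (fun M : ℕ =>
      1/12 - 1/(12*(M:ℝ)^(2*d+2)) + (1/(2*(M:ℝ)) + 1/Real.sqrt M))
      Filter.atTop (nhds (1/12)) := by
    have := hL.add (hinv2.add hinv3)
    simpa using this
  have key : ∀ M : ℕ, 1 ≤ M →
      (1/12 - 1/(12*(M:ℝ)^(2*d+2)) ≤ Rave2 M (M^(d+1)) / (M:ℝ)^d ∧
       Rave2 M (M^(d+1)) / (M:ℝ)^d
         ≤ 1/12 - 1/(12*(M:ℝ)^(2*d+2)) + (1/(2*(M:ℝ)) + 1/Real.sqrt M)) := by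
    intro M hM
    have hM0 : 0 < M := hM
    have hMR : (1:ℝ) ≤ (M:ℝ) := by exact_mod_cast hM
    have hMpos : (0:ℝ) < (M:ℝ) := by linarith
    set M2 := M^(d+1) with hM2
    have hM2pos : 0 < M2 := pow_pos hM0 _
    have hM2R : ((M2:ℕ):ℝ) = (M:ℝ)^(d+1) := by rw [hM2]; push_cast; ring
    set S := ∑ i ∈ Ico 1 M, ∑ j ∈ range M2,
        1/(4 - 2*Real.cos (2*Real.pi*i/(M:ℝ)) - 2*Real.cos (2*Real.pi*j/(M2:ℝ))) with hS
    have hsplit : (∑ i ∈ range M, ∑ j ∈ range M2,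
        if i = 0 ∧ j = 0 then (0:ℝ)
        else 1/(4 - 2*Real.cos (2*Real.pi*i/(M:ℝ)) - 2*Real.cos (2*Real.pi*j/(M2:ℝ))))
        = (((M2:ℕ):ℝ)^2 - 1)/12 + S := by
      rw [show (range M : Finset ℕ) = Ico 0 M from Finset.range_eq_Ico M, Finset.sum_eq_sum_Ico_succ_bot hM0]
      congr 1
      · rw [← cycle_sum M2 hM2pos]
        refine Finset.sum_congr rfl fun j _ => ?_
        by_cases hj : j = 0
        · simp [hj]
        · simp only [hj, and_false, if_false]
          norm_num [Real.cos_zero]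
      · rw [hS]
        refine Finset.sum_congr rfl fun i hi => Finset.sum_congr rfl fun j _ => ?_
        have hi1 : i ≠ 0 := by
          have := (Finset.mem_Ico.mp hi).1
          omega
        simp only [hi1, false_and, if_false]
    have hrave : Rave2 M M2 = (1/((M:ℝ)*((M2:ℕ):ℝ))) * ((((M2:ℕ):ℝ)^2 - 1)/12 + S) := by
      rw [Rave2, hsplit]
    set P := (M:ℝ)^(2*d+2) with hP
    have hPpos : (0:ℝ) < P := by positivity
    have hprod : (M:ℝ)*((M2:ℕ):ℝ)*(M:ℝ)^d = P := by rw [hM2R, hP]; ring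
    have hM2sq : ((M2:ℕ):ℝ)^2 = P := by rw [hM2R, hP]; ring
    have hF : Rave2 M M2 / (M:ℝ)^d = ((P-1)/12)/P + S/P := by
      rw [hrave, hM2sq, one_div_mul_eq_div, div_div, hprod, add_div]
    have identL : 1/12 - 1/(12*P) = ((P-1)/12)/P := by
      field_simp
    have hS0 : 0 ≤ S := by
      rw [hS]
      refine Finset.sum_nonneg fun i _ => Finset.sum_nonneg fun j _ => ?_
      apply one_div_nonneg.mpr
      have c1 := Real.cos_le_one (2*Real.pi*i/(M:ℝ))
      have c2 := Real.cos_le_one (2*Real.pi*j/(M2:ℝ))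
      linarith
    constructor
    · rw [hF, identL]
      exact le_add_of_nonneg_right (div_nonneg hS0 hPpos.le)
    · rw [hF, identL]
      have hSb : S ≤ (M:ℝ)^2/2 + (M:ℝ)*((M2:ℕ):ℝ)*Real.sqrt M := by
        rw [hS]
        exact err_bound M M2 hM0 hM2pos
      have hb1 : ((M:ℝ)^2/2)/P ≤ 1/(2*(M:ℝ)) := by
        rw [div_le_div_iff₀ hPpos (by positivity)]
        have h3 : (M:ℝ)^3 ≤ P := by
          rw [hP]
          exact pow_le_pow_right₀ hMR (by omega)
        nlinarith [h3]
      have hb2 : ((M:ℝ)*((M2:ℕ):ℝ)*Real.sqrt M)/P ≤ 1/Real.sqrt M := by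
        have hsp : (0:ℝ) < Real.sqrt M := Real.sqrt_pos.mpr hMpos
        rw [div_le_div_iff₀ hPpos hsp]
        have hss : Real.sqrt (M:ℝ) * Real.sqrt (M:ℝ) = (M:ℝ) := Real.mul_self_sqrt hMpos.le
        have heq : (M:ℝ)*((M2:ℕ):ℝ)*Real.sqrt M*Real.sqrt M = (M:ℝ)^(d+3) := by
          rw [hM2R, mul_assoc, hss]
          ring
        have hpow2 : (M:ℝ)^(d+3) ≤ (M:ℝ)^(2*d+2) := pow_le_pow_right₀ hMR (by omega)
        rw [heq, one_mul, hP]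
        exact hpow2
      have hSP : S/P ≤ ((M:ℝ)^2/2)/P + ((M:ℝ)*((M2:ℕ):ℝ)*Real.sqrt M)/P := by
        rw [← add_div]
        gcongr
      have := le_trans hSP (add_le_add hb1 hb2)
      linarith [this]
  apply tendsto_of_tendsto_of_tendsto_of_le_of_le' hL hU
  · filter_upwards [Filter.eventually_ge_atTop 1] with M hM
    exact (key M hM).1
  · filter_upwards [Filter.eventually_ge_atTop 1] with M hM
    exact (key M hM).2

theorem torus2_power_asymptotic (c : ℕ) (hc : 3 ≤ c) :
    Filter.Tendsto (fun M : ℕ => Rave2 M (M ^ (c - 1)) / (M : ℝ) ^ (c - 2)) Filter.atTop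
      (nhds (1 / 12)) := by
  have h1 : c - 1 = (c - 2) + 1 := by omega
  rw [h1]
  exact main_limit (c - 2) (by omega)
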